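/- arXiv:2208.09190 — 7 statements merged into one kernel-verified Lean document; each statement's English description precedes it below -/
import Mathlib

section
/- Let ι be a nonempty finite index set, let a : ι → ℝ with a j > 0 (sequential times), v : ι → ℝ with v j ≥ 0 (remote data volumes), and let B > 0 (bandwidth per node), n > 0 (number of nodes of the allocation), C > 0 (cores per node), T > 0. Suppose c : ι → ℝ satisfies c j > 0 for all j, ∑ j, c j = C, and for every j: a j / (n * c j) + v j / (B * n) = T. Then T = (B * (∑ j, a j) + ∑ j, c j * v j) / (B * C * n). -/
/-- Lemma (Eq. (8)): if all jobs co-scheduled on an allocation of `n` nodes with per-node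
core counts `c j` summing to `C` have the same per-iteration time `T`, then
`T = (B * ∑ a j + ∑ c j * v j) / (B * C * n)`. -/
theorem coSched_equalized_allocation_time
    {ι : Type*} [Fintype ι] [Nonempty ι]
    (a v : ι → ℝ) (ha : ∀ j, 0 < a j) (hv : ∀ j, 0 ≤ v j)
    (B n C T : ℝ) (hB : 0 < B) (hn : 0 < n) (hC : 0 < C) (hT : 0 < T)
    (c : ι → ℝ) (hc : ∀ j, 0 < c j) (hsum : (∑ j, c j) = C)
    (heq : ∀ j, a j / (n * c j) + v j / (B * n) = T) :
    T = (B * (∑ j, a j) + ∑ j, c j * v j) / (B * C * n) := by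
  have key : ∀ j, B * a j + c j * v j = c j * (B * n * T) := by
    intro j
    have h := heq j
    have hcj := (hc j).ne'
    field_simp at h
    nlinarith [h]
  have hsumkey : (∑ j, (B * a j + c j * v j)) = (∑ j, c j) * (B * n * T) := by
    rw [Finset.sum_mul]
    exact Finset.sum_congr rfl fun j _ => key j
  rw [Finset.sum_add_distrib, ← Finset.mul_sum, hsum] at hsumkey
  have : B * C * n ≠ 0 := by positivity
  field_simp
  linarith [hsumkey]
end

section
/- Let ι be a nonempty finite index set, a j > 0, v j ≥ 0 for j ∈ ι, and B > 0, n > 0, C > 0, T > 0. Suppose c : ι → ℝ satisfies c j > 0, ∑ j, c j = C, and a j / (n * c j) + v j / (B * n) = T for every j (an equalized allocation). Then for every other allocation c' : ι → ℝ with c' j > 0 for all j and ∑ j, c' j ≤ C, one has max_j (a j / (n * c' j) + v j / (B * n)) ≥ T. In other words, the equalized allocation minimizes the maximum per-iteration time over all core allocations respecting the budget C. -/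
/-- Optimality of the equalized allocation: if `c` equalizes the per-iteration times of
all jobs of an allocation at value `T` using the full core budget `C`, then any other
core allocation `c'` respecting the budget has maximum per-iteration time at least `T`. -/
theorem coSched_equalized_allocation_minimizes_max
    {ι : Type*} [Fintype ι] [Nonempty ι]
    (a v : ι → ℝ) (ha : ∀ j, 0 < a j) (hv : ∀ j, 0 ≤ v j)
    (B n C T : ℝ) (hB : 0 < B) (hn : 0 < n) (hC : 0 < C) (hT : 0 < T)
    (c : ι → ℝ) (hc : ∀ j, 0 < c j) (hsum : (∑ j, c j) = C)
    (heq : ∀ j, a j / (n * c j) + v j / (B * n) = T) :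
    ∀ c' : ι → ℝ, (∀ j, 0 < c' j) → (∑ j, c' j) ≤ C →
      T ≤ Finset.univ.sup' Finset.univ_nonempty
        (fun j => a j / (n * c' j) + v j / (B * n)) := by
  intro c' hc' hsum'
  by_contra h
  push_neg at h
  have key : ∀ j, c j < c' j := by
    intro j
    have h1 : a j / (n * c' j) + v j / (B * n) < T := by
      calc a j / (n * c' j) + v j / (B * n)
          ≤ Finset.univ.sup' Finset.univ_nonempty
            (fun j => a j / (n * c' j) + v j / (B * n)) :=
            Finset.le_sup' (fun j => a j / (n * c' j) + v j / (B * n)) (Finset.mem_univ j)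
        _ < T := h
    rw [← heq j] at h1
    have h2 : a j / (n * c' j) < a j / (n * c j) := by linarith
    have hpos1 : 0 < n * c j := mul_pos hn (hc j)
    have hpos2 : 0 < n * c' j := mul_pos hn (hc' j)
    have := (div_lt_div_iff₀ hpos2 hpos1).mp h2
    nlinarith [mul_pos (ha j) hn]
  have : (∑ j, c j) < ∑ j, c' j :=
    Finset.sum_lt_sum_of_nonempty Finset.univ_nonempty (fun j _ => key j)
  linarith
end

section
/- Let ι be a nonempty finite index set of jobs with sequential times a x > 0, and let B > 0, N > 0, C > 0. Consider any resource assignment n x > 0 (nodes) and c x > 0 (cores per node) satisfying the total budget ∑ x, n x * c x ≤ N * C, and remote data volumes v x ≥ 0, with per-iteration times t x = a x / (n x * c x) + v x / (B * n x). Then max_x t x ≥ (∑ x, a x) / (N * C). Moreover, if v k > 0 for some job k, then the inequality is strict: max_x t x > (∑ x, a x) / (N * C). -/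
/-- Core of Theorem 1: under the total budget `∑ n x * c x ≤ N * C`, the maximum
per-iteration time is at least `(∑ a x) / (N * C)`, and strictly larger as soon as some
job `k` has a positive remote data volume `v k > 0`. -/
theorem coSched_ideal_lower_bound
    {ι : Type*} [Fintype ι] [Nonempty ι]
    (a v n c : ι → ℝ) (ha : ∀ x, 0 < a x) (hv : ∀ x, 0 ≤ v x)
    (hn : ∀ x, 0 < n x) (hc : ∀ x, 0 < c x)
    (B N C : ℝ) (hB : 0 < B) (hN : 0 < N) (hC : 0 < C)
    (hbudget : (∑ x, n x * c x) ≤ N * C)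
    (t : ι → ℝ) (ht : ∀ x, t x = a x / (n x * c x) + v x / (B * n x)) :
    (∑ x, a x) / (N * C) ≤ Finset.univ.sup' Finset.univ_nonempty t ∧
    (∀ k, 0 < v k →
      (∑ x, a x) / (N * C) < Finset.univ.sup' Finset.univ_nonempty t) := by
  set M := Finset.univ.sup' Finset.univ_nonempty t with hM
  have hle : ∀ x, t x ≤ M := fun x => Finset.le_sup' t (Finset.mem_univ x)
  have hnc : ∀ x, 0 < n x * c x := fun x => mul_pos (hn x) (hc x)
  have hdiv : ∀ x, a x / (n x * c x) ≤ M := fun x => by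
    have := hle x
    rw [ht x] at this
    have h2 : 0 ≤ v x / (B * n x) := div_nonneg (hv x) (le_of_lt (mul_pos hB (hn x)))
    linarith
  have hax : ∀ x, a x ≤ M * (n x * c x) := fun x => by
    have := (div_le_iff₀ (hnc x)).mp (hdiv x)
    linarith [this]
  have hM0 : 0 ≤ M := by
    obtain ⟨x⟩ := ‹Nonempty ι›
    have := hdiv x
    have := div_pos (ha x) (hnc x)
    linarith
  have hNC : 0 < N * C := mul_pos hN hC
  have hsum : (∑ x, a x) ≤ M * (N * C) := by
    calc (∑ x, a x) ≤ ∑ x, M * (n x * c x) :=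
          Finset.sum_le_sum (fun x _ => hax x)
      _ = M * ∑ x, n x * c x := by rw [Finset.mul_sum]
      _ ≤ M * (N * C) := mul_le_mul_of_nonneg_left hbudget hM0
  refine ⟨(div_le_iff₀ hNC).mpr hsum, fun k hk => ?_⟩
  have hdivk : a k / (n k * c k) < M := by
    have := hle k
    rw [ht k] at this
    have h2 : 0 < v k / (B * n k) := div_pos hk (mul_pos hB (hn k))
    linarith
  have hak : a k < M * (n k * c k) := by
    have := (div_lt_iff₀ (hnc k)).mp hdivk
    linarith
  have hsum' : (∑ x, a x) < M * (N * C) := by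
    calc (∑ x, a x) < ∑ x, M * (n x * c x) :=
          Finset.sum_lt_sum (fun x _ => hax x) ⟨k, Finset.mem_univ k, hak⟩
      _ = M * ∑ x, n x * c x := by rw [Finset.mul_sum]
      _ ≤ M * (N * C) := mul_le_mul_of_nonneg_left hbudget hM0
  exact (div_lt_iff₀ hNC).mpr hsum'
end

section
/- Let N > 0, B > 0, C > 0, t* > 0 be real numbers, and let n*, n', s be real numbers with n' > s > 0 and n* + s > n'. Let U*, U', R be real numbers satisfying R = (t* * B * C + (U' − U*) / N) * s and U' − U* = (N / n') * (t* * B * C * (n* − n') + R). Then (U' − U*) * (n' − s) = N * t* * B * C * (n* + s − n'), and consequently U' > U*. -/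
/-- Algebraic core of the proof of Theorem 2: from the helper identity (Eq. (27)) and the
difference identity (Eq. (26)) one obtains Eq. (28),
`(U' − U*) * (n' − s) = N * t* * B * C * (n* + s − n')`, and consequently `U' > U*`. -/
theorem coSched_analysisOnly_strictly_better
    (N B C tstar nstar n' s Ustar U' R : ℝ)
    (hN : 0 < N) (hB : 0 < B) (hC : 0 < C) (htstar : 0 < tstar)
    (hs : 0 < s) (hsn : s < n') (hnn : n' < nstar + s)
    (hR : R = (tstar * B * C + (U' - Ustar) / N) * s)
    (hdiff : U' - Ustar = (N / n') * (tstar * B * C * (nstar - n') + R)) :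
    (U' - Ustar) * (n' - s) = N * tstar * B * C * (nstar + s - n') ∧ Ustar < U' := by
  have hn' : (0:ℝ) < n' := hs.trans hsn
  have hNne : N ≠ 0 := hN.ne'
  have hn'ne : n' ≠ 0 := hn'.ne'
  subst hR
  rw [div_mul_eq_mul_div, eq_div_iff hn'ne] at hdiff
  have key : (U' - Ustar) * (n' - s) = N * tstar * B * C * (nstar + s - n') := by
    field_simp at hdiff ⊢
    ring_nf at hdiff ⊢
    linarith
  refine ⟨key, ?_⟩
  have h1 : 0 < N * tstar * B * C * (nstar + s - n') := by
    have := sub_pos.mpr hnn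
    positivity
  nlinarith [key, sub_pos.mpr hsn]
end

section
/- Let ι be a nonempty finite index set, Q k > 0 for k ∈ ι, d k ∈ ℝ, and B > 0. Let u₀ = max_k (−d k). Then there exists a unique real number U with U > u₀ such that ∑ k, Q k / (U + d k) = 1 / B. -/
/-- Eq. (5) has a unique real root on the domain where all denominators are positive:
there is exactly one `U > max_k (−d k)` with `∑ k, Q k / (U + d k) = 1 / B`. -/
theorem coSched_root_exists_unique
    {ι : Type*} [Fintype ι] [Nonempty ι]
    (Q : ι → ℝ) (hQ : ∀ k, 0 < Q k) (d : ι → ℝ) (B : ℝ) (hB : 0 < B)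
    (u₀ : ℝ) (hu₀ : u₀ = Finset.univ.sup' Finset.univ_nonempty (fun k => -d k)) :
    ∃! U : ℝ, u₀ < U ∧ (∑ k, Q k / (U + d k)) = 1 / B := by
  set f : ℝ → ℝ := fun U => ∑ k, Q k / (U + d k) with hf
  -- denominators positive on the domain
  have hden : ∀ {U : ℝ}, u₀ < U → ∀ k, 0 < U + d k := by
    intro U hU k
    have : -d k ≤ u₀ := hu₀ ▸ Finset.le_sup' (fun k => -d k) (Finset.mem_univ k)
    linarith
  -- strict antitonicity
  have hanti : StrictAntiOn f (Set.Ioi u₀) := by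
    intro x hx y hy hxy
    apply Finset.sum_lt_sum_of_nonempty Finset.univ_nonempty
    intro k _
    exact div_lt_div_of_pos_left (hQ k) (hden hx k) (by linarith)
  -- point a close to u₀ where f a > 1/B
  obtain ⟨k₀, -, hk₀⟩ := Finset.exists_mem_eq_sup' Finset.univ_nonempty (fun k => -d k)
  set a : ℝ := u₀ + B * Q k₀ / 2 with ha
  have hBQ : 0 < B * Q k₀ / 2 := by have := hQ k₀; positivity
  have hau : u₀ < a := by simp [ha]; linarith
  have hfa : 1 / B < f a := by
    have h1 : Q k₀ / (a + d k₀) ≤ f a :=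
      Finset.single_le_sum (f := fun k => Q k / (a + d k))
        (fun k _ => le_of_lt (div_pos (hQ k) (hden hau k))) (Finset.mem_univ k₀)
    have h2 : a + d k₀ = B * Q k₀ / 2 := by
      have : u₀ = -d k₀ := by rw [hu₀, hk₀]
      rw [ha, this]; ring
    have hq := (hQ k₀).ne'
    have hb' := hB.ne'
    have h3 : Q k₀ / (a + d k₀) = 2 / B := by
      rw [h2]; field_simp
    have : (1 : ℝ) / B < 2 / B := by
      rw [div_lt_div_iff₀ hB hB]; nlinarith
    linarith [h1, h3 ▸ h1]
  -- point b large where f b < 1/B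
  set n : ℝ := (Fintype.card ι : ℝ) with hn
  have hnpos : 0 < n := by
    simp [hn]; exact Fintype.card_pos
  set b : ℝ := 1 + Finset.univ.sup' Finset.univ_nonempty (fun k => B * n * Q k - d k) with hb
  have hbk : ∀ k, 1 + B * n * Q k ≤ b + d k := by
    intro k
    have := Finset.le_sup' (fun k => B * n * Q k - d k) (Finset.mem_univ k)
    simp only [hb]; linarith
  have hbu : u₀ < b := by
    rw [hu₀]
    rw [Finset.sup'_lt_iff]
    intro k _
    have := hbk k
    have : 0 < b + d k := by nlinarith [hQ k, mul_pos (mul_pos hB hnpos) (hQ k)]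
    linarith
  have hfb : f b < 1 / B := by
    have key : ∀ k : ι, Q k / (b + d k) < 1 / (B * n) := by
      intro k
      have h1 : 0 < B * n * Q k := mul_pos (mul_pos hB hnpos) (hQ k)
      have h2 : B * n * Q k < b + d k := by linarith [hbk k]
      rw [div_lt_div_iff₀ (by linarith) (by positivity)]
      nlinarith [hQ k]
    calc f b < ∑ _k : ι, 1 / (B * n) :=
            Finset.sum_lt_sum_of_nonempty Finset.univ_nonempty (fun k _ => key k)
      _ = n * (1 / (B * n)) := by
            rw [Finset.sum_const, Finset.card_univ, nsmul_eq_mul, hn]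
      _ = 1 / B := by field_simp
  have hab : a < b := by
    by_contra h
    push_neg at h
    rcases eq_or_lt_of_le h with h | h
    · rw [← h] at hfa; linarith
    · have := hanti (Set.mem_Ioi.mpr hbu) (Set.mem_Ioi.mpr hau) h; linarith
  -- continuity
  have hcont : ContinuousOn f (Set.Icc a b) := by
    apply continuousOn_finset_sum
    intro k _
    apply ContinuousOn.div continuousOn_const
    · exact (continuous_id.add continuous_const).continuousOn
    · intro x hx
      have : u₀ < x := lt_of_lt_of_le hau hx.1
      exact ne_of_gt (hden this k)
  -- IVT for decreasing function
  have hmem : (1 : ℝ) / B ∈ Set.Icc (f b) (f a) := ⟨le_of_lt hfb, le_of_lt hfa⟩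
  obtain ⟨U, hU, hfU⟩ := intermediate_value_Icc' (le_of_lt hab) hcont hmem
  have hUu : u₀ < U := lt_of_lt_of_le hau hU.1
  refine ⟨U, ⟨hUu, hfU⟩, ?_⟩
  rintro V ⟨hVu, hfV⟩
  exact hanti.injOn (Set.mem_Ioi.mpr hVu) (Set.mem_Ioi.mpr hUu) (hfV.trans hfU.symm)
end

section
/- Let ι be a nonempty finite index set (analyses in one analysis-only allocation), with Q k > 0 (sequential times) and V k ≥ 0 (received data volumes) for k ∈ ι, and let B > 0, C > 0, n > 0. Set Q = ∑ k, Q k. Suppose U ∈ ℝ satisfies B*Q + U − C*V k > 0 for every k and ∑ k, Q k / (B*Q + U − C*V k) = 1/B. Define c k = B * Q k * C / (B*Q + U − C*V k). Then: (1) c k > 0 for every k; (2) ∑ k, c k = C; (3) ∑ k, c k * V k = U (so U is indeed the remote-processing cost of the allocation); and (4) for every k, Q k / (n * c k) + V k / (B * n) = (B*Q + U) / (B * C * n), i.e., all analyses in the allocation finish each iteration at the same time. -/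
/-- Core-level part of Theorem 3 (Eq. (4)): if `U` solves Eq. (5) with positive
denominators, then the cores `c k = B * Q k * C / (B*Q + U − C*V k)` are positive, sum to
`C`, have remote-processing cost `∑ c k * V k = U`, and equalize all per-iteration times
at `(B*Q + U) / (B * C * n)`. -/
theorem coSched_analysisOnly_core_allocation
    {ι : Type*} [Fintype ι] [Nonempty ι]
    (Q V : ι → ℝ) (hQ : ∀ k, 0 < Q k) (hV : ∀ k, 0 ≤ V k)
    (B C n : ℝ) (hB : 0 < B) (hC : 0 < C) (hn : 0 < n)
    (Qtot : ℝ) (hQtot : Qtot = ∑ k, Q k)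
    (U : ℝ) (hden : ∀ k, 0 < B * Qtot + U - C * V k)
    (hroot : (∑ k, Q k / (B * Qtot + U - C * V k)) = 1 / B)
    (c : ι → ℝ) (hc : ∀ k, c k = B * Q k * C / (B * Qtot + U - C * V k)) :
    (∀ k, 0 < c k) ∧
    (∑ k, c k) = C ∧
    (∑ k, c k * V k) = U ∧
    (∀ k, Q k / (n * c k) + V k / (B * n) = (B * Qtot + U) / (B * C * n)) := by
  have hcpos : ∀ k, 0 < c k := fun k => by
    rw [hc k]
    exact div_pos (mul_pos (mul_pos hB (hQ k)) hC) (hden k)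
  have hsum : (∑ k, c k) = C := by
    have : (∑ k, c k) = B * C * ∑ k, Q k / (B * Qtot + U - C * V k) := by
      rw [Finset.mul_sum]
      refine Finset.sum_congr rfl fun k _ => ?_
      rw [hc k]; ring
    rw [this, hroot]
    field_simp
  have hU : (∑ k, c k * V k) = U := by
    have key : ∀ k, c k * V k =
        B * ((B * Qtot + U) * (Q k / (B * Qtot + U - C * V k)) - Q k) := by
      intro k
      have hd := (hden k).ne'
      rw [hc k]
      field_simp
      ring
    calc (∑ k, c k * V k)
        = ∑ k, B * ((B * Qtot + U) * (Q k / (B * Qtot + U - C * V k)) - Q k) := by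
          exact Finset.sum_congr rfl fun k _ => key k
      _ = B * ((B * Qtot + U) * (∑ k, Q k / (B * Qtot + U - C * V k)) - ∑ k, Q k) := by
          simp only [mul_sub, Finset.mul_sum, Finset.sum_sub_distrib, mul_assoc]
      _ = U := by
          rw [hroot, ← hQtot]
          field_simp
          ring
  refine ⟨hcpos, hsum, hU, fun k => ?_⟩
  have hd := (hden k).ne'
  rw [hc k]
  have hQk := (hQ k).ne'
  field_simp
  ring
end

section
/- Let ι be a finite index set (the analysis-only co-scheduling allocations), with Q i > 0 and U i ≥ 0 for i ∈ ι, let Q_s > 0 (aggregate sequential time of the simulation-based allocations), and let B > 0, C > 0, N > 0. Set Q_nc = ∑ i, Q i, U = ∑ i, U i, and Q_tot = Q_s + Q_nc. Define n i = (B*Q i + U i) * N / (B*Q_tot + U) and Ñ = ∑ i, n i. Then: (1) Ñ = (B*Q_nc + U) * N / (B*Q_tot + U) and Ñ < N; (2) for every i, (B*Q i + U i) / (B * C * n i) = (B*Q_tot + U) / (N * B * C); and (3) Q_s / (C * (N − Ñ)) = (B*Q_tot + U) / (N * B * C); i.e., all allocations have the same equalized per-iteration time (B*Q_tot + U)/(N*B*C).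 -/
/-- Node-level part of Theorem 3 (Eq. (3)): allocating
`n i = (B*Q i + U i) * N / (B*Q_tot + U)` nodes to each analysis-only allocation gives a
total `Ntilde = (B*Q_nc + U) * N / (B*Q_tot + U) < N`, and all allocations (analysis-only and
simulation-based) have the same equalized per-iteration time `(B*Q_tot + U)/(N*B*C)`. -/
theorem coSched_analysisOnly_node_allocation
    {ι : Type*} [Fintype ι]
    (Q U' : ι → ℝ) (hQ : ∀ i, 0 < Q i) (hU' : ∀ i, 0 ≤ U' i)
    (Qs : ℝ) (hQs : 0 < Qs)
    (B C N : ℝ) (hB : 0 < B) (hC : 0 < C) (hN : 0 < N)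
    (Qnc U Qtot : ℝ)
    (hQnc : Qnc = ∑ i, Q i) (hU : U = ∑ i, U' i) (hQtot : Qtot = Qs + Qnc)
    (n : ι → ℝ) (hn : ∀ i, n i = (B * Q i + U' i) * N / (B * Qtot + U))
    (Ntilde : ℝ) (hNtilde : Ntilde = ∑ i, n i) :
    (Ntilde = (B * Qnc + U) * N / (B * Qtot + U) ∧ Ntilde < N) ∧
    (∀ i, (B * Q i + U' i) / (B * C * n i) = (B * Qtot + U) / (N * B * C)) ∧
    Qs / (C * (N - Ntilde)) = (B * Qtot + U) / (N * B * C) := by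
  have hQnc0 : 0 ≤ Qnc := by
    rw [hQnc]; exact Finset.sum_nonneg fun i _ => (hQ i).le
  have hU0 : 0 ≤ U := by
    rw [hU]; exact Finset.sum_nonneg fun i _ => hU' i
  have hD : 0 < B * Qtot + U := by
    have : 0 < B * Qtot := by
      apply mul_pos hB
      rw [hQtot]; linarith
    linarith
  have hsum : ∑ i, (B * Q i + U' i) = B * Qnc + U := by
    rw [hQnc, hU, Finset.mul_sum, ← Finset.sum_add_distrib]
  have hNt : Ntilde = (B * Qnc + U) * N / (B * Qtot + U) := by
    rw [hNtilde]
    rw [Finset.sum_congr rfl fun i _ => hn i]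
    rw [← Finset.sum_div, ← Finset.sum_mul, hsum]
  have hlt : Ntilde < N := by
    rw [hNt, div_lt_iff₀ hD]
    have : B * Qnc + U < B * Qtot + U := by
      rw [hQtot]; nlinarith
    nlinarith
  refine ⟨⟨hNt, hlt⟩, fun i => ?_, ?_⟩
  · rw [hn i]
    have hnum : 0 < B * Q i + U' i := by nlinarith [hQ i, hU' i]
    field_simp
  · rw [hNt]
    have hsub : N - (B * Qnc + U) * N / (B * Qtot + U) = N * (B * Qs) / (B * Qtot + U) := by
      field_simp
      rw [hQtot]; ring
    rw [hsub]
    field_simp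
end
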